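/- Suppose (Φ, v, F) and (Φ', v', F') are two covariant representations of a C*-dynamical system (G, A, α) on Hilbert B-modules, and W ∈ L_B(E, F), W' ∈ L_B(E, F') satisfy: ρ(a) = W* Φ(a) W = W'* Φ'(a) W' for all a ∈ A; the sets {Φ(a) W ξ} and {Φ'(a) W' ξ} span dense submodules of F and F' respectively; and v_g W = W u_g, v'_g W' = W' u_g for all g ∈ G. Then there is a unitary U ∈ L_B(F, F') with Φ'(a) U = U Φ(a) for all a ∈ A, v'_g U = U v_g for all g ∈ G, and W' = U W. -/

import Mathlib

/-- The right Hilbert C⋆-module class `CStarModule` as it stood in Mathlib (December 2024):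
`E` carries a right action of `A` (via `Aᵐᵒᵖ`) and an `A`-valued inner product. -/
class OldCStarModule (A : outParam <| Type*) (E : Type*) [NonUnitalSemiring A] [StarRing A]
    [Module ℂ A] [AddCommGroup E] [Module ℂ E] [PartialOrder A] [SMul Aᵐᵒᵖ E] [Norm A] [Norm E]
    extends Inner A E where
  inner_add_right {x} {y} {z} : inner x (y + z) = inner x y + inner x z
  inner_self_nonneg {x} : 0 ≤ inner x x
  inner_self {x} : inner x x = 0 ↔ x = 0
  inner_op_smul_right {a : A} {x y : E} : inner x (MulOpposite.op a • y) = inner x y * a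
  inner_smul_right_complex {z : ℂ} {x} {y} : inner x (z • y) = z • inner x y
  star_inner x y : star (inner x y) = inner y x
  norm_eq_sqrt_norm_inner_self x : ‖x‖ = √‖inner x x‖

attribute [simp] OldCStarModule.inner_add_right OldCStarModule.star_inner
attribute [simp] OldCStarModule.inner_op_smul_right OldCStarModule.inner_smul_right_complex

namespace OldCStarModule

section general

variable {A E : Type*} [NonUnitalCStarAlgebra A] [PartialOrder A] [AddCommGroup E]
  [Module ℂ E] [SMul Aᵐᵒᵖ E] [Norm E] [OldCStarModule A E]

local notation "⟪" x ", " y "⟫" => inner (𝕜 := A) x y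

@[simp]
lemma inner_add_left {x y z : E} : ⟪x + y, z⟫ = ⟪x, z⟫ + ⟪y, z⟫ := by
  rw [← star_star (r := ⟪x + y, z⟫)]
  simp only [inner_add_right, star_add, star_inner]

@[simp]
lemma inner_op_smul_left {a : A} {x y : E} : ⟪MulOpposite.op a • x, y⟫ = star a * ⟪x, y⟫ := by
  rw [← star_inner y, inner_op_smul_right, star_mul, star_inner]

@[simp]
lemma inner_smul_left_complex {z : ℂ} {x y : E} : ⟪z • x, y⟫ = star z • ⟪x, y⟫ := by
  rw [← star_inner y, inner_smul_right_complex, star_smul, star_inner]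

@[simp]
lemma inner_smul_left_real {z : ℝ} {x y : E} : ⟪z • x, y⟫ = z • ⟪x, y⟫ := by
  have h₁ : z • x = (z : ℂ) • x := by simp
  rw [h₁, inner_smul_left_complex]
  simp

@[simp]
lemma inner_smul_right_real {z : ℝ} {x y : E} : ⟪x, z • y⟫ = z • ⟪x, y⟫ := by
  have h₁ : z • y = (z : ℂ) • y := by simp
  rw [h₁, inner_smul_right_complex]
  simp

/-- The function `⟨x, y⟩ ↦ ⟪x, y⟫` bundled as a sesquilinear map. -/
def innerₛₗ : E →ₗ⋆[ℂ] E →ₗ[ℂ] A where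
  toFun x := { toFun := fun y => ⟪x, y⟫
               map_add' := fun z y => by simp
               map_smul' := fun z y => by simp }
  map_add' z y := by ext; simp
  map_smul' z y := by ext; simp

lemma innerₛₗ_apply {x y : E} : innerₛₗ x y = ⟪x, y⟫ := rfl

@[simp] lemma inner_zero_right {x : E} : ⟪x, 0⟫ = 0 := by simp [← innerₛₗ_apply]
@[simp] lemma inner_zero_left {x : E} : ⟪0, x⟫ = 0 := by simp [← innerₛₗ_apply]
@[simp] lemma inner_sub_right {x y z : E} : ⟪x, y - z⟫ = ⟪x, y⟫ - ⟪x, z⟫ := by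
  simp [← innerₛₗ_apply]
@[simp] lemma inner_sub_left {x y z : E} : ⟪x - y, z⟫ = ⟪x, z⟫ - ⟪y, z⟫ := by
  simp [← innerₛₗ_apply]

end general

section normlemmas

protected lemma norm_pos (A : Type*) {E : Type*} [NonUnitalCStarAlgebra A] [PartialOrder A]
    [AddCommGroup E] [Module ℂ E] [SMul Aᵐᵒᵖ E] [Norm E] [OldCStarModule A E]
    {x : E} (hx : x ≠ 0) : 0 < ‖x‖ := by
  simp only [norm_eq_sqrt_norm_inner_self (A := A), Real.sqrt_pos, norm_pos_iff]
  intro H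
  rw [inner_self] at H
  exact hx H

protected lemma norm_zero (A : Type*) {E : Type*} [NonUnitalCStarAlgebra A] [PartialOrder A]
    [AddCommGroup E] [Module ℂ E] [SMul Aᵐᵒᵖ E] [Norm E] [OldCStarModule A E] :
    ‖(0 : E)‖ = 0 := by simp [norm_eq_sqrt_norm_inner_self (A := A)]

protected lemma norm_nonneg (A : Type*) {E : Type*} [NonUnitalCStarAlgebra A] [PartialOrder A]
    [AddCommGroup E] [Module ℂ E] [SMul Aᵐᵒᵖ E] [Norm E] [OldCStarModule A E]
    {x : E} : 0 ≤ ‖x‖ := by simp [norm_eq_sqrt_norm_inner_self (A := A)]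

end normlemmas

section general2

variable {A E : Type*} [NonUnitalCStarAlgebra A] [PartialOrder A] [AddCommGroup E]
  [Module ℂ E] [SMul Aᵐᵒᵖ E] [Norm E] [OldCStarModule A E]

local notation "⟪" x ", " y "⟫" => inner (𝕜 := A) x y

variable [StarOrderedRing A]

lemma inner_mul_inner_swap_le {x y : E} : ⟪y, x⟫ * ⟪x, y⟫ ≤ ‖x‖ ^ 2 • ⟪y, y⟫ := by
  rcases eq_or_ne x 0 with h | h
  · simp [h, OldCStarModule.norm_zero A (E := E)]
  · have h₁ : ∀ (a : A),
        (0 : A) ≤ ‖x‖ ^ 2 • (star a * a) - ‖x‖ ^ 2 • (⟪y, x⟫ * a)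
                  - ‖x‖ ^ 2 • (star a * ⟪x, y⟫) + ‖x‖ ^ 2 • (‖x‖ ^ 2 • ⟪y, y⟫) := fun a => by
      calc (0 : A) ≤ ⟪MulOpposite.op a • x - ‖x‖ ^ 2 • y, MulOpposite.op a • x - ‖x‖ ^ 2 • y⟫ := by
                      exact inner_self_nonneg
            _ = star a * ⟪x, x⟫ * a - ‖x‖ ^ 2 • (⟪y, x⟫ * a)
                  - ‖x‖ ^ 2 • (star a * ⟪x, y⟫) + ‖x‖ ^ 2 • (‖x‖ ^ 2 • ⟪y, y⟫) := by
                      simp only [inner_sub_right, inner_op_smul_right, inner_sub_left,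
                        inner_op_smul_left, inner_smul_left_real, mul_sub, sub_mul,
                        mul_smul_comm, smul_mul_assoc,
                        inner_smul_right_real, smul_sub, mul_assoc]
                      abel
            _ ≤ ‖x‖ ^ 2 • (star a * a) - ‖x‖ ^ 2 • (⟪y, x⟫ * a)
                  - ‖x‖ ^ 2 • (star a * ⟪x, y⟫) + ‖x‖ ^ 2 • (‖x‖ ^ 2 • ⟪y, y⟫) := by
                      gcongr
                      calc _ ≤ ‖⟪x, x⟫‖ • (star a * a) :=
                          CStarAlgebra.star_left_conjugate_le_norm_smul (star_inner x x)
                        _ = (√‖⟪x, x⟫‖) ^ 2 • (star a * a) := by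
                          rw [Real.sq_sqrt]
                          positivity
                        _ = ‖x‖ ^ 2 • (star a * a) := by rw [← norm_eq_sqrt_norm_inner_self]
    specialize h₁ ⟪x, y⟫
    simp only [star_inner, sub_self, zero_sub, le_neg_add_iff_add_le, add_zero] at h₁
    rwa [smul_le_smul_iff_of_pos_left (pow_pos (OldCStarModule.norm_pos A h) _)] at h₁

variable (E) in
lemma norm_inner_le {x y : E} : ‖⟪x, y⟫‖ ≤ ‖x‖ * ‖y‖ := by
  have := calc ‖⟪x, y⟫‖ ^ 2 = ‖⟪y, x⟫ * ⟪x, y⟫‖ := by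
                rw [← star_inner x y, CStarRing.norm_star_mul_self, pow_two]
    _ ≤ ‖‖x‖ ^ 2 • ⟪y, y⟫‖ := by
                refine CStarAlgebra.norm_le_norm_of_nonneg_of_le ?_ inner_mul_inner_swap_le
                rw [← star_inner x y]
                exact star_mul_self_nonneg ⟪x, y⟫
    _ = ‖x‖ ^ 2 * ‖⟪y, y⟫‖ := by simp [norm_smul]
    _ = ‖x‖ ^ 2 * ‖y‖ ^ 2 := by
                simp only [norm_eq_sqrt_norm_inner_self (A := A), norm_nonneg, Real.sq_sqrt]
    _ = (‖x‖ * ‖y‖) ^ 2 := by simp only [mul_pow]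
  refine (pow_le_pow_iff_left₀ (norm_nonneg ⟪x, y⟫) ?_ (by simp)).mp this
  exact mul_nonneg (OldCStarModule.norm_nonneg A) (OldCStarModule.norm_nonneg A)

end general2

section NormedAddCommGroup

variable {A E : Type*} [NonUnitalCStarAlgebra A] [PartialOrder A] [StarOrderedRing A]
  [SMul Aᵐᵒᵖ E] [NormedAddCommGroup E] [NormedSpace ℂ E] [OldCStarModule A E]

/-- The function `⟨x, y⟩ ↦ ⟪x, y⟫` bundled as a continuous sesquilinear map. -/
noncomputable def innerSL : E →L⋆[ℂ] E →L[ℂ] A :=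
  LinearMap.mkContinuous₂ (innerₛₗ : E →ₗ⋆[ℂ] E →ₗ[ℂ] A) 1 <| fun x y => by
    simp [innerₛₗ_apply, norm_inner_le E]

lemma innerSL_apply {x y : E} : innerSL x y = inner (𝕜 := A) x y := rfl

lemma continuous_inner : Continuous (fun x : E × E => inner (𝕜 := A) x.1 x.2) := by
  simp_rw [← innerSL_apply]
  fun_prop

end NormedAddCommGroup

end OldCStarModule

/-- Uniqueness (up to unitary equivalence) in the covariant KSGNS construction:
two covariant representations (Φ, v, F), (Φ', v', F') together with W, W' implementing the
same completely positive map ρ, with total ranges and intertwining v_g W = W u_g,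
v'_g W' = W' u_g, are unitarily equivalent via a unitary U with Φ'(a) U = U Φ(a),
v'_g U = U v_g and W' = U W. -/
theorem stmt6 {A : Type*} [CStarAlgebra A]
    {B : Type*} [NonUnitalCStarAlgebra B] [PartialOrder B] [StarOrderedRing B]
    {E : Type*} [NormedAddCommGroup E] [NormedSpace ℂ E] [SMul Bᵐᵒᵖ E] [OldCStarModule B E]
    {F : Type*} [NormedAddCommGroup F] [NormedSpace ℂ F] [SMul Bᵐᵒᵖ F] [OldCStarModule B F]
    [CompleteSpace F]
    {F' : Type*} [NormedAddCommGroup F'] [NormedSpace ℂ F'] [SMul Bᵐᵒᵖ F'] [OldCStarModule B F']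
    [CompleteSpace F']
    {G : Type*} [Group G]
    (α : G → A ≃⋆ₐ[ℂ] A)
    (hα : ∀ g h : G, α (g * h) = (α h).trans (α g))
    -- u : unitary representation of G on E
    (u : G → E →L[ℂ] E)
    (hu_one : u 1 = ContinuousLinearMap.id ℂ E)
    (hu_mul : ∀ g h : G, u (g * h) = (u g).comp (u h))
    (hu_inner : ∀ (g : G) (x y : E), inner (𝕜 := B) (u g x) (u g y) = inner (𝕜 := B) x y)
    (hu_surj : ∀ g : G, Function.Surjective (u g))
    (ρ : A →ₗ[ℂ] E →L[ℂ] E)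
    -- (Φ, v, F) : a covariant representation of (G, A, α) on F
    (Φ : A →ₗ[ℂ] F →L[ℂ] F)
    (hΦ_mul : ∀ a b : A, Φ (a * b) = (Φ a).comp (Φ b))
    (hΦ_star : ∀ (a : A) (x y : F),
      inner (𝕜 := B) (Φ a x) y = inner (𝕜 := B) x (Φ (star a) y))
    (v : G → F →L[ℂ] F)
    (hv_one : v 1 = ContinuousLinearMap.id ℂ F)
    (hv_mul : ∀ g h : G, v (g * h) = (v g).comp (v h))
    (hv_inner : ∀ (g : G) (x y : F), inner (𝕜 := B) (v g x) (v g y) = inner (𝕜 := B) x y)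
    (hv_surj : ∀ g : G, Function.Surjective (v g))
    (hcovF : ∀ (g : G) (a : A), Φ (α g a) = ((v g).comp (Φ a)).comp (v g⁻¹))
    -- (Φ', v', F') : another covariant representation of (G, A, α) on F'
    (Φ' : A →ₗ[ℂ] F' →L[ℂ] F')
    (hΦ'_mul : ∀ a b : A, Φ' (a * b) = (Φ' a).comp (Φ' b))
    (hΦ'_star : ∀ (a : A) (x y : F'),
      inner (𝕜 := B) (Φ' a x) y = inner (𝕜 := B) x (Φ' (star a) y))
    (v' : G → F' →L[ℂ] F')
    (hv'_one : v' 1 = ContinuousLinearMap.id ℂ F')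
    (hv'_mul : ∀ g h : G, v' (g * h) = (v' g).comp (v' h))
    (hv'_inner : ∀ (g : G) (x y : F'),
      inner (𝕜 := B) (v' g x) (v' g y) = inner (𝕜 := B) x y)
    (hv'_surj : ∀ g : G, Function.Surjective (v' g))
    (hcovF' : ∀ (g : G) (a : A), Φ' (α g a) = ((v' g).comp (Φ' a)).comp (v' g⁻¹))
    -- W ∈ L_B(E, F) and W' ∈ L_B(E, F') (adjointable operators)
    (W : E →L[ℂ] F) (Wstar : F →L[ℂ] E)
    (hW_adj : ∀ (ξ : E) (x : F), inner (𝕜 := B) (W ξ) x = inner (𝕜 := B) ξ (Wstar x))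
    (W' : E →L[ℂ] F') (W'star : F' →L[ℂ] E)
    (hW'_adj : ∀ (ξ : E) (x : F'), inner (𝕜 := B) (W' ξ) x = inner (𝕜 := B) ξ (W'star x))
    -- (a) ρ(a) = W* Φ(a) W = W'* Φ'(a) W'
    (ha : ∀ a : A, ρ a = (Wstar.comp (Φ a)).comp W)
    (ha' : ∀ a : A, ρ a = (W'star.comp (Φ' a)).comp W')
    -- (b) the ranges are total
    (hb : Dense (↑(Submodule.span ℂ {y : F | ∃ (a : A) (ξ : E), y = Φ a (W ξ)}) : Set F))
    (hb' : Dense (↑(Submodule.span ℂ {y : F' | ∃ (a : A) (ξ : E), y = Φ' a (W' ξ)}) : Set F'))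
    -- (c) intertwining relations
    (hc : ∀ g : G, (v g).comp W = W.comp (u g))
    (hc' : ∀ g : G, (v' g).comp W' = W'.comp (u g)) :
    ∃ U : F →L[ℂ] F',
      (∀ x y : F, inner (𝕜 := B) (U x) (U y) = inner (𝕜 := B) x y) ∧
      Function.Surjective U ∧
      (∀ a : A, (Φ' a).comp U = U.comp (Φ a)) ∧
      (∀ g : G, (v' g).comp U = U.comp (v g)) ∧
      W' = U.comp W := by
  classical
  open CStarModule in
  -- notation for inner products
  -- generator sets
  set genF : Set F := {y : F | ∃ (a : A) (ξ : E), y = Φ a (W ξ)} with hgenF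
  set genF' : Set F' := {y : F' | ∃ (a : A) (ξ : E), y = Φ' a (W' ξ)} with hgenF'
  set genP : Set (F × F') := {p | ∃ (a : A) (ξ : E), p = (Φ a (W ξ), Φ' a (W' ξ))} with hgenP
  set S : Submodule ℂ (F × F') := Submodule.span ℂ genP with hS
  -- basic computation: inner products of generators reduce to ρ
  have hρ : ∀ (a b : A) (ξ η : E),
      inner (𝕜 := B) (Φ a (W ξ)) (Φ b (W η)) = inner (𝕜 := B) ξ ((ρ (star a * b)) η) := by
    intro a b ξ η
    have h1 : Φ (star a) (Φ b (W η)) = Φ (star a * b) (W η) := by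
      rw [hΦ_mul]; rfl
    rw [hΦ_star, h1, hW_adj, ha (star a * b)]; rfl
  have hρ' : ∀ (a b : A) (ξ η : E),
      inner (𝕜 := B) (Φ' a (W' ξ)) (Φ' b (W' η)) = inner (𝕜 := B) ξ ((ρ (star a * b)) η) := by
    intro a b ξ η
    have h1 : Φ' (star a) (Φ' b (W' η)) = Φ' (star a * b) (W' η) := by
      rw [hΦ'_mul]; rfl
    rw [hΦ'_star, h1, hW'_adj, ha' (star a * b)]; rfl
  -- key: on S, the inner products of the two components agree
  have key : ∀ p ∈ S, ∀ q ∈ S,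
      inner (𝕜 := B) p.2 q.2 = inner (𝕜 := B) p.1 q.1 := by
    intro p hp q hq
    induction hp, hq using Submodule.span_induction₂ with
    | mem_mem x y hx hy =>
      obtain ⟨a, ξ, rfl⟩ := hx
      obtain ⟨b, η, rfl⟩ := hy
      simp only [hρ, hρ']
    | zero_left y hy => simp
    | zero_right x hx => simp
    | add_left x y z hx hy hz h1 h2 =>
      simp only [Prod.fst_add, Prod.snd_add, OldCStarModule.inner_add_left, h1, h2]
    | add_right x y z hx hy hz h1 h2 =>
      simp only [Prod.fst_add, Prod.snd_add, OldCStarModule.inner_add_right, h1, h2]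
    | smul_left r x y hx hy h1 =>
      simp only [Prod.smul_fst, Prod.smul_snd, OldCStarModule.inner_smul_left_complex, h1]
    | smul_right r x y hx hy h1 =>
      simp only [Prod.smul_fst, Prod.smul_snd, OldCStarModule.inner_smul_right_complex, h1]
  have hnorm : ∀ p ∈ S, ‖p.2‖ = ‖p.1‖ := by
    intro p hp
    rw [OldCStarModule.norm_eq_sqrt_norm_inner_self (A := B) p.2, key p hp p hp,
      ← OldCStarModule.norm_eq_sqrt_norm_inner_self (A := B) p.1]
  -- the two coordinate projections restricted to S
  set φL : S →L[ℂ] F := (ContinuousLinearMap.fst ℂ F F').comp S.subtypeL with hφL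
  set ψL : S →L[ℂ] F' := (ContinuousLinearMap.snd ℂ F F').comp S.subtypeL with hψL
  have hφ_isom : Isometry φL := by
    apply AddMonoidHomClass.isometry_of_norm
    intro s
    have h2 : ‖(s : F × F')‖ = max ‖(s : F × F').1‖ ‖(s : F × F').2‖ := Prod.norm_def _
    have h3 : ‖(s : F × F').2‖ = ‖(s : F × F').1‖ := hnorm _ s.2
    show ‖(s : F × F').1‖ = ‖s‖
    rw [show ‖s‖ = ‖(s : F × F')‖ from rfl, h2, h3, max_self]
  -- the range of φL is the span of genF, which is dense
  have hrange : Set.range φL = ↑(Submodule.span ℂ genF) := by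
    have himg : (Prod.fst : F × F' → F) '' genP = genF := by
      ext y
      constructor
      · rintro ⟨p, ⟨a, ξ, rfl⟩, rfl⟩; exact ⟨a, ξ, rfl⟩
      · rintro ⟨a, ξ, rfl⟩; exact ⟨(Φ a (W ξ), Φ' a (W' ξ)), ⟨a, ξ, rfl⟩, rfl⟩
    have hmap : Submodule.map (LinearMap.fst ℂ F F') S = Submodule.span ℂ genF := by
      rw [hS, Submodule.map_span]
      exact congrArg (Submodule.span ℂ) himg
    rw [← hmap]
    ext y
    simp only [Set.mem_range, Submodule.map_coe, Set.mem_image, SetLike.mem_coe]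
    constructor
    · rintro ⟨s, rfl⟩; exact ⟨(s : F × F'), s.2, rfl⟩
    · rintro ⟨p, hp, rfl⟩; exact ⟨⟨p, hp⟩, rfl⟩
  have hdense : DenseRange φL := by
    rw [DenseRange, hrange]; exact hb
  -- the unitary U, obtained by extending ψL ∘ φL⁻¹
  set U : F →L[ℂ] F' := ψL.extend φL with hU
  have hUφψ : ∀ s : S, U (φL s) = ψL s := fun s =>
    ContinuousLinearMap.extend_eq ψL hdense hφ_isom.isUniformInducing s
  have hUgen : ∀ (a : A) (ξ : E), U (Φ a (W ξ)) = Φ' a (W' ξ) := by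
    intro a ξ
    have hm : ((Φ a (W ξ), Φ' a (W' ξ)) : F × F') ∈ S :=
      Submodule.subset_span ⟨a, ξ, rfl⟩
    exact hUφψ ⟨_, hm⟩
  -- U preserves inner products
  have hUinner : ∀ x y : F, inner (𝕜 := B) (U x) (U y) = inner (𝕜 := B) x y := by
    have hfun : (fun p : F × F => inner (𝕜 := B) (U p.1) (U p.2))
        = fun p : F × F => inner (𝕜 := B) p.1 p.2 := by
      apply Continuous.ext_on (Dense.prod hdense hdense)
      · exact (OldCStarModule.continuous_inner (A := B)).comp
          ((U.continuous.comp continuous_fst).prodMk (U.continuous.comp continuous_snd))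
      · exact OldCStarModule.continuous_inner (A := B)
      · rintro ⟨x, y⟩ ⟨⟨s, rfl⟩, ⟨t, rfl⟩⟩
        show inner (𝕜 := B) (U (φL s)) (U (φL t)) = inner (𝕜 := B) (φL s) (φL t)
        rw [hUφψ, hUφψ]
        exact key _ s.2 _ t.2
    intro x y
    exact congrFun hfun (x, y)
  have hUnorm : ∀ x : F, ‖U x‖ = ‖x‖ := by
    intro x
    rw [OldCStarModule.norm_eq_sqrt_norm_inner_self (A := B) (U x), hUinner,
      ← OldCStarModule.norm_eq_sqrt_norm_inner_self (A := B) x]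
  have hU_isom : Isometry U := AddMonoidHomClass.isometry_of_norm U hUnorm
  -- Φ(1) fixes W ξ (and likewise for primes): orthogonality argument
  have hone : ∀ ξ : E, Φ 1 (W ξ) = W ξ := by
    intro ξ
    set z : F := Φ 1 (W ξ) - W ξ with hz
    have horthgen : ∀ y ∈ genF, inner (𝕜 := B) z y = 0 := by
      rintro y ⟨b, η, rfl⟩
      rw [hz, OldCStarModule.inner_sub_left, hΦ_star]
      have : Φ (star (1 : A)) (Φ b (W η)) = Φ b (W η) := by
        rw [star_one, ← ContinuousLinearMap.comp_apply, ← hΦ_mul, one_mul]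
      rw [this, sub_self]
    have horth : ∀ y ∈ Submodule.span ℂ genF, inner (𝕜 := B) z y = 0 := by
      intro y hy
      induction hy using Submodule.span_induction with
      | mem x hx => exact horthgen x hx
      | zero => simp
      | add x y hx hy h1 h2 => rw [OldCStarModule.inner_add_right, h1, h2, add_zero]
      | smul r x hx h1 => rw [OldCStarModule.inner_smul_right_complex, h1, smul_zero]
    have hall : ∀ y : F, inner (𝕜 := B) z y = 0 := by
      have hfun : (fun y : F => inner (𝕜 := B) z y) = fun _ : F => (0 : B) := by
        apply Continuous.ext_on hb
        · exact (OldCStarModule.continuous_inner (A := B)).comp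
            (continuous_const.prodMk continuous_id)
        · exact continuous_const
        · intro y hy; exact horth y hy
      intro y; exact congrFun hfun y
    have : z = 0 := OldCStarModule.inner_self.mp (hall z)
    have := sub_eq_zero.mp this
    exact this
  have hone' : ∀ ξ : E, Φ' 1 (W' ξ) = W' ξ := by
    intro ξ
    set z : F' := Φ' 1 (W' ξ) - W' ξ with hz
    have horthgen : ∀ y ∈ genF', inner (𝕜 := B) z y = 0 := by
      rintro y ⟨b, η, rfl⟩
      rw [hz, OldCStarModule.inner_sub_left, hΦ'_star]
      have : Φ' (star (1 : A)) (Φ' b (W' η)) = Φ' b (W' η) := by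
        rw [star_one, ← ContinuousLinearMap.comp_apply, ← hΦ'_mul, one_mul]
      rw [this, sub_self]
    have horth : ∀ y ∈ Submodule.span ℂ genF', inner (𝕜 := B) z y = 0 := by
      intro y hy
      induction hy using Submodule.span_induction with
      | mem x hx => exact horthgen x hx
      | zero => simp
      | add x y hx hy h1 h2 => rw [OldCStarModule.inner_add_right, h1, h2, add_zero]
      | smul r x hx h1 => rw [OldCStarModule.inner_smul_right_complex, h1, smul_zero]
    have hall : ∀ y : F', inner (𝕜 := B) z y = 0 := by
      have hfun : (fun y : F' => inner (𝕜 := B) z y) = fun _ : F' => (0 : B) := by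
        apply Continuous.ext_on hb'
        · exact (OldCStarModule.continuous_inner (A := B)).comp
            (continuous_const.prodMk continuous_id)
        · exact continuous_const
        · intro y hy; exact horth y hy
      intro y; exact congrFun hfun y
    have : z = 0 := OldCStarModule.inner_self.mp (hall z)
    exact sub_eq_zero.mp this
  -- surjectivity
  have hUsurj : Function.Surjective U := by
    have hclosed : IsClosed (Set.range U) := hU_isom.isClosedEmbedding.isClosed_range
    have hsub : (↑(Submodule.span ℂ genF') : Set F') ⊆ Set.range U := by
      intro y hy
      have h1 : Submodule.span ℂ genF' ≤ LinearMap.range (U : F →ₗ[ℂ] F') :=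
        Submodule.span_le.mpr (by rintro y ⟨a, ξ, rfl⟩; exact ⟨Φ a (W ξ), hUgen a ξ⟩)
      obtain ⟨x, hx⟩ := h1 hy
      exact ⟨x, hx⟩
    intro y
    have : y ∈ closure (↑(Submodule.span ℂ genF') : Set F') := hb' y
    have : y ∈ Set.range U := by
      have := closure_minimal hsub hclosed
      exact this (hb' y)
    exact this
  refine ⟨U, hUinner, hUsurj, ?_, ?_, ?_⟩
  · -- intertwines Φ and Φ'
    intro a
    apply ContinuousLinearMap.ext_on hb
    rintro y ⟨b, ξ, rfl⟩
    show Φ' a (U (Φ b (W ξ))) = U (Φ a (Φ b (W ξ)))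
    calc Φ' a (U (Φ b (W ξ))) = Φ' (a * b) (W' ξ) := by rw [hUgen, hΦ'_mul]; rfl
      _ = U (Φ (a * b) (W ξ)) := (hUgen _ _).symm
      _ = U (Φ a (Φ b (W ξ))) := by rw [hΦ_mul]; rfl
  · -- intertwines v and v'
    intro g
    have hv_cov : ∀ (a : A) (x : F), v g (Φ a x) = Φ (α g a) (v g x) := by
      intro a x
      have h1 : (Φ (α g a)).comp (v g) = (v g).comp (Φ a) := by
        rw [hcovF g a, ContinuousLinearMap.comp_assoc, ContinuousLinearMap.comp_assoc,
          ← hv_mul, inv_mul_cancel, hv_one]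
        rfl
      exact (ContinuousLinearMap.ext_iff.mp h1 x).symm
    have hv'_cov : ∀ (a : A) (x : F'), v' g (Φ' a x) = Φ' (α g a) (v' g x) := by
      intro a x
      have h1 : (Φ' (α g a)).comp (v' g) = (v' g).comp (Φ' a) := by
        rw [hcovF' g a, ContinuousLinearMap.comp_assoc, ContinuousLinearMap.comp_assoc,
          ← hv'_mul, inv_mul_cancel, hv'_one]
        rfl
      exact (ContinuousLinearMap.ext_iff.mp h1 x).symm
    apply ContinuousLinearMap.ext_on hb
    rintro y ⟨a, ξ, rfl⟩
    show v' g (U (Φ a (W ξ))) = U (v g (Φ a (W ξ)))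
    have hWc : v g (W ξ) = W (u g ξ) := by
      have := congrFun (congrArg DFunLike.coe (hc g)) ξ
      exact this
    have hW'c : v' g (W' ξ) = W' (u g ξ) := by
      have := congrFun (congrArg DFunLike.coe (hc' g)) ξ
      exact this
    rw [hUgen, hv_cov, hv'_cov, hWc, hW'c, hUgen]
  · -- W' = U ∘ W
    ext ξ
    show W' ξ = U (W ξ)
    rw [← hone ξ, hUgen, hone']
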